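/- Let Q be a linear operator on F[x] that lowers the degree of every polynomial by one (with deg 0 = −1 convention), and write Q x^n = ∑_{k=1}^n b_{n,k} x^{n−k} with b_{n,1} ≠ 0 and (after normalization) b_{1,1} = 1. Then there exist a sequence {q_k}_{k≥2} ⊂ F and an admissible sequence ψ such that Q = ∂_ψ + ∑_{k≥2} q_k ∂_ψ^k if and only if b_{n,k} = C(n,k)_ψ · b_{k,k} for all n ≥ k ≥ 1, where C(n,k)_ψ is the ψ-binomial coefficient. Moreover, when they exist, {q_k} and ψ are unique. -/

import Mathlib

open Polynomial

lemma coeff_sum_pow {F : Type*} [Field F] (n j : ℕ) (f : ℕ → F)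
    (hj : j ∈ Finset.Icc 1 n) :
    (∑ k ∈ Finset.Icc 1 n, f k • (X : F[X]) ^ (n - k)).coeff (n - j) = f j := by
  rw [Polynomial.finset_sum_coeff, Finset.sum_eq_single j]
  · simp
  · intro k hk hkj
    simp only [Polynomial.coeff_smul, Polynomial.coeff_X_pow, smul_eq_mul]
    rw [if_neg, mul_zero]
    simp only [Finset.mem_Icc] at hk hj
    omega
  · intro h; exact absurd hj h

lemma Dpow_monomial {F : Type*} [Field F] (D : F[X] →ₗ[F] F[X]) (nψ : ℕ → F)
    (hD : ∀ n : ℕ, D (X ^ (n + 1)) = nψ (n + 1) • X ^ n) :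
    ∀ k n : ℕ, k ≤ n →
      (D ^ k) (X ^ n) = (∏ i ∈ Finset.range k, nψ (n - i)) • X ^ (n - k) := by
  intro k
  induction k with
  | zero => intro n _; simp
  | succ k ih =>
    intro n hn
    obtain ⟨m, rfl⟩ : ∃ m, n = m + 1 := ⟨n - 1, by omega⟩
    rw [pow_succ, Module.End.mul_apply, hD m, map_smul, ih m (by omega),
      Finset.prod_range_succ', smul_smul]
    simp only [Nat.sub_zero]
    congr 1
    · rw [mul_comm]
      congr 1
      refine Finset.prod_congr rfl fun i _ => ?_
      congr 1
      omega
    · congr 1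
      omega

lemma series_eq_sum {F : Type*} [Field F] (D : F[X] →ₗ[F] F[X]) (nψ q : ℕ → F)
    (hD : ∀ n : ℕ, D (X ^ (n + 1)) = nψ (n + 1) • X ^ n)
    (n : ℕ) (hn : 1 ≤ n) :
    D (X ^ n) + ∑ k ∈ Finset.Icc 2 n, q k • (D ^ k) (X ^ n)
      = ∑ k ∈ Finset.Icc 1 n,
          ((if k = 1 then 1 else q k) * ∏ i ∈ Finset.range k, nψ (n - i)) • X ^ (n - k) := by
  have hins : Finset.Icc 1 n = insert 1 (Finset.Icc 2 n) := by
    ext x; simp only [Finset.mem_Icc, Finset.mem_insert]; omega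
  rw [hins, Finset.sum_insert (by simp)]
  congr 1
  · obtain ⟨m, rfl⟩ : ∃ m, n = m + 1 := ⟨n - 1, by omega⟩
    rw [hD m]
    simp
  · refine Finset.sum_congr rfl fun k hk => ?_
    simp only [Finset.mem_Icc] at hk
    rw [Dpow_monomial D nψ hD k n hk.2, if_neg (by omega), smul_smul]

lemma b_eq {F : Type*} [Field F]
    (Q : F[X] →ₗ[F] F[X]) (b : ℕ → ℕ → F)
    (hQb : ∀ n : ℕ, Q (X ^ n) = ∑ k ∈ Finset.Icc 1 n, b n k • X ^ (n - k))
    (D : F[X] →ₗ[F] F[X]) (nψ q : ℕ → F)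
    (hD : ∀ n : ℕ, D (X ^ (n + 1)) = nψ (n + 1) • X ^ n)
    (hser : ∀ n : ℕ, Q (X ^ n) = D (X ^ n) + ∑ k ∈ Finset.Icc 2 n, q k • (D ^ k) (X ^ n)) :
    ∀ n k : ℕ, 1 ≤ k → k ≤ n →
      b n k = (if k = 1 then 1 else q k) * ∏ i ∈ Finset.range k, nψ (n - i) := by
  intro n k hk hkn
  have h := (hQb n).symm.trans ((hser n).trans (series_eq_sum D nψ q hD n (le_trans hk hkn)))
  have hmem : k ∈ Finset.Icc 1 n := Finset.mem_Icc.2 ⟨hk, hkn⟩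
  have h2 := congrArg (fun p => Polynomial.coeff p (n - k)) h
  rw [coeff_sum_pow n k _ hmem, coeff_sum_pow n k _ hmem] at h2
  exact h2

lemma nψ_eq_b1 {F : Type*} [Field F]
    (Q : F[X] →ₗ[F] F[X]) (b : ℕ → ℕ → F)
    (hQb : ∀ n : ℕ, Q (X ^ n) = ∑ k ∈ Finset.Icc 1 n, b n k • X ^ (n - k))
    (D : F[X] →ₗ[F] F[X]) (nψ q : ℕ → F)
    (hD : ∀ n : ℕ, D (X ^ (n + 1)) = nψ (n + 1) • X ^ n)
    (hser : ∀ n : ℕ, Q (X ^ n) = D (X ^ n) + ∑ k ∈ Finset.Icc 2 n, q k • (D ^ k) (X ^ n)) :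
    ∀ m : ℕ, 1 ≤ m → nψ m = b m 1 := by
  intro m hm
  have := b_eq Q b hQb D nψ q hD hser m 1 le_rfl hm
  simpa using this.symm


/-- Observation 2.1: a degree-lowering operator Q with
Q x^n = ∑_{k=1}^n b_{n,k} x^{n-k}, b_{n,1} ≠ 0, b_{1,1} = 1, is a formal series
∂_ψ + ∑_{k≥2} q_k ∂_ψ^k in some ψ-derivative iff b_{n,k} = C(n,k)_ψ b_{k,k}
(with n_ψ = b_{n,1}), and then q and ψ are unique. -/
theorem generalized_diff_op_is_series_in_psi_derivative_iff
    (F : Type*) [Field F] [CharZero F]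
    (Q : Polynomial F →ₗ[F] Polynomial F)
    (hQc : ∀ c : F, Q (C c) = 0)
    (hQdeg : ∀ p : Polynomial F, 1 ≤ p.natDegree →
      Q p ≠ 0 ∧ (Q p).natDegree = p.natDegree - 1)
    (b : ℕ → ℕ → F)
    (hQb : ∀ n : ℕ, Q (X ^ n) = ∑ k ∈ Finset.Icc 1 n, b n k • X ^ (n - k))
    (hb1 : ∀ n : ℕ, 1 ≤ n → b n 1 ≠ 0)
    (hb11 : b 1 1 = 1) :
    ((∃ ψ nψ q : ℕ → F, ∃ D : Polynomial F →ₗ[F] Polynomial F,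
        ψ 0 = 1 ∧ (∀ n, ψ n ≠ 0) ∧
        nψ 0 = 0 ∧ (∀ n, nψ (n + 1) = ψ n / ψ (n + 1)) ∧
        D 1 = 0 ∧ (∀ n : ℕ, D (X ^ (n + 1)) = nψ (n + 1) • X ^ n) ∧
        (∀ n : ℕ, Q (X ^ n) = D (X ^ n) + ∑ k ∈ Finset.Icc 2 n, q k • (D ^ k) (X ^ n)))
      ↔
      (∀ n k : ℕ, 1 ≤ k → k ≤ n →
        b n k = ((∏ i ∈ Finset.range k, b (n - i) 1) /
                  (∏ i ∈ Finset.range k, b (k - i) 1)) * b k k))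
    ∧
    (∀ ψ₁ nψ₁ q₁ : ℕ → F, ∀ D₁ : Polynomial F →ₗ[F] Polynomial F,
     ∀ ψ₂ nψ₂ q₂ : ℕ → F, ∀ D₂ : Polynomial F →ₗ[F] Polynomial F,
      (ψ₁ 0 = 1 ∧ (∀ n, ψ₁ n ≠ 0) ∧
        nψ₁ 0 = 0 ∧ (∀ n, nψ₁ (n + 1) = ψ₁ n / ψ₁ (n + 1)) ∧
        D₁ 1 = 0 ∧ (∀ n : ℕ, D₁ (X ^ (n + 1)) = nψ₁ (n + 1) • X ^ n) ∧
        (∀ n : ℕ, Q (X ^ n) = D₁ (X ^ n) + ∑ k ∈ Finset.Icc 2 n, q₁ k • (D₁ ^ k) (X ^ n))) →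
      (ψ₂ 0 = 1 ∧ (∀ n, ψ₂ n ≠ 0) ∧
        nψ₂ 0 = 0 ∧ (∀ n, nψ₂ (n + 1) = ψ₂ n / ψ₂ (n + 1)) ∧
        D₂ 1 = 0 ∧ (∀ n : ℕ, D₂ (X ^ (n + 1)) = nψ₂ (n + 1) • X ^ n) ∧
        (∀ n : ℕ, Q (X ^ n) = D₂ (X ^ n) + ∑ k ∈ Finset.Icc 2 n, q₂ k • (D₂ ^ k) (X ^ n))) →
      ψ₁ = ψ₂ ∧ ∀ k : ℕ, 2 ≤ k → q₁ k = q₂ k) := by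
  
  constructor
  · -- the iff
    constructor
    · rintro ⟨ψ, nψ, q, D, hψ0, hψne, hnψ0, hnψ, hD1, hD, hser⟩
      intro n k hk hkn
      have key := b_eq Q b hQb D nψ q hD hser
      have hb1' := nψ_eq_b1 Q b hQb D nψ q hD hser
      have hPn : ∏ i ∈ Finset.range k, b (n - i) 1 = ∏ i ∈ Finset.range k, nψ (n - i) := by
        refine Finset.prod_congr rfl fun i hi => ?_
        simp only [Finset.mem_range] at hi
        exact (hb1' (n - i) (by omega)).symm
      have hPk : ∏ i ∈ Finset.range k, b (k - i) 1 = ∏ i ∈ Finset.range k, nψ (k - i) := by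
        refine Finset.prod_congr rfl fun i hi => ?_
        simp only [Finset.mem_range] at hi
        exact (hb1' (k - i) (by omega)).symm
      have hPkne : (∏ i ∈ Finset.range k, nψ (k - i)) ≠ 0 := by
        rw [← hPk]
        refine Finset.prod_ne_zero_iff.2 fun i hi => ?_
        simp only [Finset.mem_range] at hi
        exact hb1 _ (by omega)
      rw [key n k hk hkn, key k k hk le_rfl, hPn, hPk]
      field_simp
    · intro h
      set P : ℕ → F := fun n => ∏ i ∈ Finset.range n, b (i + 1) 1 with hP
      have hPne : ∀ n, P n ≠ 0 := by
        intro n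
        refine Finset.prod_ne_zero_iff.2 fun i _ => hb1 _ (by omega)
      obtain ⟨D, hD1, hD⟩ : ∃ D : F[X] →ₗ[F] F[X], D 1 = 0 ∧
          ∀ m : ℕ, D (X ^ (m + 1)) =
            (if m + 1 = 0 then (0 : F) else b (m + 1) 1) • X ^ m := by
        refine ⟨(Polynomial.basisMonomials F).constr F
          (fun n => (if n = 0 then (0 : F) else b n 1) • X ^ (n - 1)), ?_, ?_⟩
        · have h1 : (1 : F[X]) = (Polynomial.basisMonomials F) 0 := by
            simp [Polynomial.coe_basisMonomials]
          rw [h1, Module.Basis.constr_basis]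
          simp
        · intro m
          have h1 : (X : F[X]) ^ (m + 1) = (Polynomial.basisMonomials F) (m + 1) := by
            simp [Polynomial.coe_basisMonomials, Polynomial.monomial_one_right_eq_X_pow]
          rw [h1, Module.Basis.constr_basis]
          simp
      refine ⟨fun n => (P n)⁻¹, fun n => if n = 0 then 0 else b n 1,
        fun k => b k k / ∏ i ∈ Finset.range k, b (k - i) 1, D,
        ?_, ?_, ?_, ?_, hD1, hD, ?_⟩
      · simp [hP]
      · intro n; exact inv_ne_zero (hPne n)
      · simp
      · intro n
        show b (n + 1) 1 = (P n)⁻¹ / (P (n + 1))⁻¹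
        rw [division_def, inv_inv,
          show P (n + 1) = P n * b (n + 1) 1 from Finset.prod_range_succ _ n,
          inv_mul_cancel_left₀ (hPne n)]
      · intro n
        have hD' : ∀ m : ℕ, D (X ^ (m + 1)) =
            (fun j => if j = 0 then (0 : F) else b j 1) (m + 1) • X ^ m := hD
        rcases Nat.eq_zero_or_pos n with rfl | hn
        · rw [hQb 0]
          have hz : D ((X : F[X]) ^ 0) = 0 := by rw [pow_zero]; exact hD1
          rw [show Finset.Icc 1 0 = (∅ : Finset ℕ) from rfl,
            show Finset.Icc 2 0 = (∅ : Finset ℕ) from rfl]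
          simp [hz, hD1]
        · refine (hQb n).trans (Eq.trans ?_
            (series_eq_sum D (fun j => if j = 0 then (0 : F) else b j 1)
              (fun k => b k k / ∏ i ∈ Finset.range k, b (k - i) 1) hD' n hn).symm)
          refine Finset.sum_congr rfl fun k hk => ?_
          simp only [Finset.mem_Icc] at hk
          congr 1
          show b n k = (if k = 1 then 1
              else b k k / ∏ i ∈ Finset.range k, b (k - i) 1) *
            ∏ i ∈ Finset.range k, (if n - i = 0 then (0 : F) else b (n - i) 1)
          have hPn : ∏ i ∈ Finset.range k, (if n - i = 0 then (0 : F) else b (n - i) 1)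
              = ∏ i ∈ Finset.range k, b (n - i) 1 := by
            refine Finset.prod_congr rfl fun i hi => ?_
            simp only [Finset.mem_range] at hi
            rw [if_neg (by omega)]
          rw [hPn]
          rcases eq_or_lt_of_le hk.1 with heq | hlt
          · subst heq
            rw [if_pos rfl, one_mul]
            simp
          · rw [if_neg (by omega)]
            have hPkne : (∏ i ∈ Finset.range k, b (k - i) 1) ≠ 0 := by
              refine Finset.prod_ne_zero_iff.2 fun i hi => ?_
              simp only [Finset.mem_range] at hi
              exact hb1 _ (by omega)
            rw [h n k hk.1 hk.2]
            field_simp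
  · -- uniqueness
    rintro ψ₁ nψ₁ q₁ D₁ ψ₂ nψ₂ q₂ D₂
      ⟨hψ10, hψ1ne, hnψ10, hnψ1, hD11, hD1, hser1⟩
      ⟨hψ20, hψ2ne, hnψ20, hnψ2, hD21, hD2, hser2⟩
    have key1 := b_eq Q b hQb D₁ nψ₁ q₁ hD1 hser1
    have key2 := b_eq Q b hQb D₂ nψ₂ q₂ hD2 hser2
    have h1 := nψ_eq_b1 Q b hQb D₁ nψ₁ q₁ hD1 hser1
    have h2 := nψ_eq_b1 Q b hQb D₂ nψ₂ q₂ hD2 hser2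
    have hnψeq : ∀ m, nψ₁ m = nψ₂ m := by
      intro m
      rcases Nat.eq_zero_or_pos m with rfl | hm
      · rw [hnψ10, hnψ20]
      · rw [h1 m hm, h2 m hm]
    have hψeq : ∀ m, ψ₁ m = ψ₂ m := by
      intro m
      induction m with
      | zero => rw [hψ10, hψ20]
      | succ m ih =>
        have hne : nψ₁ (m + 1) ≠ 0 := by rw [h1 (m + 1) (by omega)]; exact hb1 _ (by omega)
        have e1 : nψ₁ (m + 1) * ψ₁ (m + 1) = ψ₁ m := by
          rw [hnψ1 m, div_mul_cancel₀ _ (hψ1ne (m + 1))]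
        have e2 : nψ₁ (m + 1) * ψ₂ (m + 1) = ψ₂ m := by
          rw [hnψeq (m + 1), hnψ2 m, div_mul_cancel₀ _ (hψ2ne (m + 1))]
        have := e1.trans (ih.trans e2.symm)
        exact mul_left_cancel₀ hne this
    refine ⟨funext hψeq, fun k hk => ?_⟩
    have hA := key1 k k (by omega) le_rfl
    have hB := key2 k k (by omega) le_rfl
    rw [if_neg (by omega)] at hA hB
    have hprod : ∏ i ∈ Finset.range k, nψ₁ (k - i) = ∏ i ∈ Finset.range k, nψ₂ (k - i) :=
      Finset.prod_congr rfl fun i _ => hnψeq _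
    have hPne : (∏ i ∈ Finset.range k, nψ₁ (k - i)) ≠ 0 := by
      refine Finset.prod_ne_zero_iff.2 fun i hi => ?_
      simp only [Finset.mem_range] at hi
      rw [h1 _ (by omega)]
      exact hb1 _ (by omega)
    have := hA.symm.trans hB
    rw [← hprod] at this
    exact mul_right_cancel₀ hPne this
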